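/- arXiv:2407.20355 — 4 statements merged into one kernel-verified Lean document; each statement's English description precedes it below -/
import Mathlib

section
/- Let p be a prime and let H be a subgroup of a finite group G. Then ν_p(H) ≤ ν_p(G). Moreover, ν_p(H) = ν_p(G) if and only if both of the following hold: (1) every Sylow p-subgroup of H is contained in a unique Sylow p-subgroup of G; and (2) G = H·N_G(P) for every Sylow p-subgroup P of G (where N_G(P) is the normalizer of P in G and H·N_G(P) is the set of products). -/
open Pointwise

section Aux

variable {p : ℕ} {G : Type} [Group G] [Finite G] {H : Subgroup G}

/-- Two Sylow `p`-subgroups of `H` contained in a common Sylow `p`-subgroup of `G`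
are equal. -/
private lemma sylow_unique_in (Q₁ Q₂ : Sylow p H) (P : Sylow p G)
    (h₁ : Subgroup.map H.subtype (Q₁ : Subgroup H) ≤ (P : Subgroup G))
    (h₂ : Subgroup.map H.subtype (Q₂ : Subgroup H) ≤ (P : Subgroup G)) : Q₁ = Q₂ := by
  have hc : IsPGroup p ((P : Subgroup G).comap H.subtype) := P.2.comap_subtype
  have e₁ : ((P : Subgroup G).comap H.subtype) = (Q₁ : Subgroup H) :=
    Q₁.3 hc (Subgroup.map_le_iff_le_comap.1 h₁)
  have e₂ : ((P : Subgroup G).comap H.subtype) = (Q₂ : Subgroup H) :=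
    Q₂.3 hc (Subgroup.map_le_iff_le_comap.1 h₂)
  exact Sylow.ext (e₁.symm.trans e₂)

private lemma map_conj_smul (h : H) (Q : Subgroup H) :
    Subgroup.map H.subtype (MulAut.conj h • Q)
      = MulAut.conj (h : G) • Subgroup.map H.subtype Q := by
  rw [Subgroup.pointwise_smul_def, Subgroup.pointwise_smul_def]
  exact (Subgroup.map_map (g := H.subtype) (f := (MulAut.conj h : H →* H)) Q).trans
    ((Subgroup.map_map (g := ((MulAut.conj (h : G) : G ≃* G) : G →* G)) (f := H.subtype) Q).symm)

private lemma smul_le_smul_sylow (h : H) (Q : Sylow p H) (P : Sylow p G)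
    (hle : Subgroup.map H.subtype (Q : Subgroup H) ≤ (P : Subgroup G)) :
    Subgroup.map H.subtype ((h • Q : Sylow p H) : Subgroup H)
      ≤ (((h : G) • P : Sylow p G) : Subgroup G) := by
  rw [Sylow.coe_subgroup_smul, Sylow.coe_subgroup_smul, map_conj_smul]
  exact Subgroup.pointwise_smul_le_pointwise_smul_iff.2 hle

end Aux

/-- for a prime `p` and a subgroup `H` of a finite group `G`, the number of
Sylow `p`-subgroups of `H` is at most that of `G`, with equality if and only if every
Sylow `p`-subgroup of `H` is contained in a unique Sylow `p`-subgroup of `G` and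
`G = H ⬝ N_G(P)` for every Sylow `p`-subgroup `P` of `G`. -/
theorem stmt10 (p : ℕ) (hp : p.Prime) (G : Type) [Group G] [Finite G] (H : Subgroup G) :
    Nat.card (Sylow p H) ≤ Nat.card (Sylow p G) ∧
      (Nat.card (Sylow p H) = Nat.card (Sylow p G) ↔
        (∀ Q : Sylow p H, ∃! P : Sylow p G,
            Subgroup.map H.subtype (Q : Subgroup H) ≤ (P : Subgroup G)) ∧
        (∀ P : Sylow p G,
            (H : Set G) * ((Subgroup.normalizer ((P : Subgroup G) : Set G) : Subgroup G) : Set G) =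
              Set.univ)) := by
  have fact_p : Fact p.Prime := ⟨hp⟩
  -- the basic injection from Sylow p H to Sylow p G
  have exP : ∀ Q : Sylow p H, ∃ P : Sylow p G,
      Subgroup.map H.subtype (Q : Subgroup H) ≤ (P : Subgroup G) :=
    fun Q => (Q.2.map H.subtype).exists_le_sylow
  set f : Sylow p H → Sylow p G := fun Q => (exP Q).choose with hf_def
  have hf : ∀ Q : Sylow p H, Subgroup.map H.subtype (Q : Subgroup H) ≤ ((f Q) : Subgroup G) :=
    fun Q => (exP Q).choose_spec
  have finj : Function.Injective f := by
    intro Q₁ Q₂ e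
    exact sylow_unique_in Q₁ Q₂ (f Q₁) (hf Q₁) (e ▸ hf Q₂)
  -- a useful bridging statement: H acts transitively on Sylow p G
  have trans_to_cond2 : (∀ P P' : Sylow p G, ∃ h : H, (h : G) • P = P') →
      (∀ P : Sylow p G,
        (H : Set G) * ((Subgroup.normalizer ((P : Subgroup G) : Set G) : Subgroup G) : Set G) = Set.univ) := by
    intro htrans P
    ext g
    simp only [Set.mem_univ, iff_true]
    obtain ⟨h, hh⟩ := htrans P (g • P)
    rw [Set.mem_mul]
    refine ⟨(h : G), h.2, (h : G)⁻¹ * g, ?_, by group⟩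
    rw [show Subgroup.normalizer ((P : Subgroup G) : Set G) = MulAction.stabilizer G P from
      (Sylow.stabilizer_eq_normalizer P).symm]
    have : ((h : G)⁻¹ * g) • P = P := by
      rw [mul_smul, ← hh, inv_smul_smul]
    exact MulAction.mem_stabilizer_iff.2 this
  refine ⟨Nat.card_le_card_of_injective f finj, ?_, ?_⟩
  · -- equality → conditions
    intro hcard
    have fbij : Function.Bijective f := (Nat.bijective_iff_injective_and_card f).2 ⟨finj, hcard⟩
    have cond1 : ∀ Q : Sylow p H, ∃! P : Sylow p G,
        Subgroup.map H.subtype (Q : Subgroup H) ≤ (P : Subgroup G) := by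
      intro Q
      refine ⟨f Q, hf Q, ?_⟩
      intro P hP
      obtain ⟨Q', rfl⟩ := fbij.2 P
      exact congrArg f (sylow_unique_in Q' Q (f Q') (hf Q') hP)
    refine ⟨cond1, trans_to_cond2 ?_⟩
    intro P P'
    obtain ⟨Q, rfl⟩ := fbij.2 P
    obtain ⟨Q', rfl⟩ := fbij.2 P'
    obtain ⟨h, hh⟩ := MulAction.exists_smul_eq H Q Q'
    refine ⟨h, ?_⟩
    have hle : Subgroup.map H.subtype (Q' : Subgroup H)
        ≤ (((h : G) • f Q : Sylow p G) : Subgroup G) := by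
      rw [← hh]
      exact smul_le_smul_sylow h Q (f Q) (hf Q)
    exact (cond1 Q').unique hle (hf Q')
  · -- conditions → equality
    rintro ⟨cond1, cond2⟩
    have fsurj : Function.Surjective f := by
      intro P
      have : Nonempty (Sylow p H) := inferInstance
      obtain ⟨Q₀⟩ := this
      obtain ⟨g, hg⟩ := MulAction.exists_smul_eq G (f Q₀) P
      have hgmem : g ∈ (H : Set G) *
          ((Subgroup.normalizer (((f Q₀ : Sylow p G) : Subgroup G) : Set G) : Subgroup G) : Set G) := by
        rw [cond2 (f Q₀)]; trivial
      rw [Set.mem_mul] at hgmem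
      obtain ⟨h, hh, n, hn, rfl⟩ := hgmem
      have hnP : n • f Q₀ = f Q₀ := by
        rw [show Subgroup.normalizer (((f Q₀ : Sylow p G) : Subgroup G) : Set G)
          = MulAction.stabilizer G (f Q₀) from (Sylow.stabilizer_eq_normalizer (f Q₀)).symm] at hn
        exact MulAction.mem_stabilizer_iff.1 hn
      have hP : h • f Q₀ = P := by
        rw [← hg, mul_smul, hnP]
      refine ⟨(⟨h, hh⟩ : H) • Q₀, ?_⟩
      have hle := smul_le_smul_sylow (⟨h, hh⟩ : H) Q₀ (f Q₀) (hf Q₀)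
      have := (cond1 ((⟨h, hh⟩ : H) • Q₀)).unique (hf _) hle
      rw [this]
      exact hP
    exact Nat.card_eq_of_bijective f ⟨finj, fsurj⟩
end

section
/- Let p be a prime, let G be a finite group, let H be a maximal subgroup of G containing a Sylow p-subgroup P of G, and let Ω be the set of conjugates of H in G, on which G acts by conjugation. Then ν_p(G) · |{K ∈ Ω : K is fixed by every element of P under conjugation}| = ν_p(H) · |Ω|. (Equivalently, ν_p(H)/ν_p(G) = fpr(P,Ω), the proportion of elements of Ω fixed by all of P.) -/
open Pointwise

section aux

variable {G : Type} [Group G]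

/-- conjugation smul on subgroups is `map` of `MulAut.conj`. -/
lemma conj_smul_eq_map (g : G) (S : Subgroup G) :
    MulAut.conj g • S = S.map (MulAut.conj g).toMonoidHom := rfl

lemma map_conj_self {K : Subgroup G} {x : G} (hx : x ∈ K) :
    Subgroup.map (MulAut.conj x).toMonoidHom K = K := by
  ext y
  simp only [Subgroup.mem_map, MulEquiv.coe_toMonoidHom, MulAut.conj_apply]
  constructor
  · rintro ⟨k, hk, rfl⟩; exact K.mul_mem (K.mul_mem hx hk) (K.inv_mem hx)
  · intro hy; exact ⟨x⁻¹ * y * x, K.mul_mem (K.mul_mem (K.inv_mem hx) hy) hx, by group⟩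

end aux

lemma card_rel_const {A B : Type} [Finite A] [Finite B] (r : A → B → Prop) (n : ℕ)
    (h : ∀ a : A, Nat.card {b : B // r a b} = n) :
    Nat.card {x : A × B // r x.1 x.2} = Nat.card A * n := by
  classical
  cases nonempty_fintype A
  cases nonempty_fintype B
  rw [Nat.card_eq_fintype_card, Nat.card_eq_fintype_card,
    Fintype.card_congr (Equiv.subtypeProdEquivSigmaSubtype r), Fintype.card_sigma]
  have : ∀ a : A, Fintype.card {b : B // r a b} = n := by
    intro a; rw [← Nat.card_eq_fintype_card, h a]
  simp [this, Finset.sum_const, Finset.card_univ]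

/-- let `p` be a prime, `G` a finite group, `H` a maximal subgroup of `G`
containing a Sylow `p`-subgroup `P` of `G`, and let `Ω` be the set of conjugates of `H`
in `G`. Then `ν_p(G) ⬝ |C_Ω(P)| = ν_p(H) ⬝ |Ω|`, i.e. `ν_p(H)/ν_p(G) = fpr(P, Ω)`. -/
theorem stmt11 (p : ℕ) (hp : p.Prime) (G : Type) [Group G] [Finite G]
    (H : Subgroup G) (hmax : IsCoatom H) (P : Sylow p G) (hPH : (P : Subgroup G) ≤ H) :
    Nat.card (Sylow p G) *
        Nat.card {K : Subgroup G |
          (∃ g : G, K = Subgroup.map (MulAut.conj g).toMonoidHom H) ∧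
          ∀ x ∈ (P : Subgroup G), Subgroup.map (MulAut.conj x).toMonoidHom K = K} =
      Nat.card (Sylow p H) *
        Nat.card {K : Subgroup G |
          ∃ g : G, K = Subgroup.map (MulAut.conj g).toMonoidHom H} := by
  have hpF : Fact p.Prime := ⟨hp⟩
  classical
  -- notation
  set inΩ : Subgroup G → Prop := fun K => ∃ g : G, K = MulAut.conj g • H with hinΩ
  -- Step A: any conjugate of H contains a Sylow p-subgroup of G
  have hSylK : ∀ {K : Subgroup G}, inΩ K → ∃ Q : Sylow p G, (Q : Subgroup G) ≤ K := by
    rintro K ⟨g, rfl⟩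
    refine ⟨g • P, ?_⟩
    rw [Sylow.coe_subgroup_smul, conj_smul_eq_map, conj_smul_eq_map]
    exact Subgroup.map_mono hPH
  -- Step B: for K ∈ Ω and Q Sylow, Q ≤ N(K) → Q ≤ K
  have key : ∀ (K : Subgroup G), inΩ K → ∀ Q : Sylow p G,
      (Q : Subgroup G) ≤ Subgroup.normalizer (K : Set G) → (Q : Subgroup G) ≤ K := by
    intro K hK Q hQN
    obtain ⟨Q₀, hQ₀⟩ := hSylK hK
    have hQ₀N : (Q₀ : Subgroup G) ≤ Subgroup.normalizer (K : Set G) := hQ₀.trans Subgroup.le_normalizer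
    set N := Subgroup.normalizer (K : Set G)
    let S1 : Sylow p N := Q.subtype hQN
    let S2 : Sylow p N := Q₀.subtype hQ₀N
    obtain ⟨n, hn⟩ := MulAction.exists_smul_eq N S2 S1
    have hS2 : (S2 : Subgroup N) ≤ K.subgroupOf N := by
      rw [Sylow.coe_subtype]
      intro x hx
      exact (Subgroup.mem_subgroupOf).2 (hQ₀ ((Subgroup.mem_subgroupOf).1 hx))
    have hnormal : (K.subgroupOf N).Normal := Subgroup.normal_in_normalizer
    intro x hx
    have hxS1 : (⟨x, hQN hx⟩ : N) ∈ (S1 : Subgroup N) := by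
      rw [Sylow.coe_subtype]; exact (Subgroup.mem_subgroupOf).2 hx
    rw [← hn] at hxS1
    rw [Sylow.coe_subgroup_smul] at hxS1
    rw [Subgroup.mem_pointwise_smul_iff_inv_smul_mem] at hxS1
    have hmem := hnormal.conj_mem _ (hS2 hxS1) n
    have heq : n * ((MulAut.conj n)⁻¹ • (⟨x, hQN hx⟩ : N)) * n⁻¹ = ⟨x, hQN hx⟩ := by
      rw [MulAut.smul_def, MulAut.conj_inv_apply]; group
    exact (Subgroup.mem_subgroupOf).1 (heq ▸ hmem)
  -- Step C: fixed-by-P condition equals P ≤ K, for K ∈ Ω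
  have fix_iff : ∀ K : Subgroup G, inΩ K →
      ((∀ x ∈ (P : Subgroup G), Subgroup.map (MulAut.conj x).toMonoidHom K = K) ↔
        (P : Subgroup G) ≤ K) := by
    intro K hK
    constructor
    · intro hfix
      refine key K hK P (fun x hx => ?_)
      rw [Subgroup.mem_normalizer_iff]
      intro h
      constructor
      · intro hh
        rw [← hfix x hx]
        exact ⟨h, hh, rfl⟩
      · intro hh
        rw [← hfix x hx] at hh
        obtain ⟨k, hk, hk2⟩ := hh
        simp only [MulEquiv.coe_toMonoidHom, MulAut.conj_apply] at hk2
        have : k = h := mul_left_cancel (mul_right_cancel hk2)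
        exact this ▸ hk
    · intro hle x hx
      exact map_conj_self (hle hx)
  -- the Ω type
  let Ωt := {K : Subgroup G // inΩ K}
  -- Step D1: fibers over Sylow subgroups are constant
  have count1 : Nat.card {x : Sylow p G × Ωt // (x.1 : Subgroup G) ≤ (x.2 : Subgroup G)} =
      Nat.card (Sylow p G) * Nat.card {K : Subgroup G // inΩ K ∧ (P : Subgroup G) ≤ K} := by
    refine card_rel_const
      (fun (Q : Sylow p G) (K : Ωt) => (Q : Subgroup G) ≤ (K : Subgroup G)) _ (fun Q => ?_)
    obtain ⟨g, hg⟩ := MulAction.exists_smul_eq G P Q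
    have e1 : {K : Subgroup G // inΩ K ∧ (P : Subgroup G) ≤ K} ≃
        {K : Subgroup G // inΩ K ∧ (Q : Subgroup G) ≤ K} := by
      refine Equiv.subtypeEquiv (MulAction.toPerm (MulAut.conj g)) (fun K => ?_)
      simp only [MulAction.toPerm_apply]
      constructor
      · rintro ⟨⟨h, rfl⟩, hle⟩
        refine ⟨⟨g * h, by rw [map_mul, mul_smul]⟩, ?_⟩
        rw [← hg, Sylow.coe_subgroup_smul]
        exact Subgroup.pointwise_smul_le_pointwise_smul_iff.2 hle
      · rintro ⟨⟨h, hh⟩, hle⟩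
        have hK : K = MulAut.conj (g⁻¹ * h) • H := by
          rw [map_mul, mul_smul, ← hh, map_inv, inv_smul_smul]
        refine ⟨⟨g⁻¹ * h, hK⟩, ?_⟩
        have : (Q : Subgroup G) = MulAut.conj g • (P : Subgroup G) := by
          rw [← hg, Sylow.coe_subgroup_smul]
        rw [this] at hle
        exact Subgroup.pointwise_smul_le_pointwise_smul_iff.1 hle
    have e2 : {K : Ωt // (Q : Subgroup G) ≤ (K : Subgroup G)} ≃
        {K : Subgroup G // inΩ K ∧ (Q : Subgroup G) ≤ K} :=
      Equiv.subtypeSubtypeEquivSubtypeInter _ _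
    rw [Nat.card_congr e2, Nat.card_congr e1]
  -- Step D2: fibers over Ω are constant, equal to the Sylow count of H
  have eSylH : {Q : Sylow p G // (Q : Subgroup G) ≤ H} ≃ Sylow p H := by
    refine Equiv.ofBijective (fun Q => Q.1.subtype Q.2) ⟨?_, ?_⟩
    · rintro ⟨Q1, h1⟩ ⟨Q2, h2⟩ h12
      have h12' := congrArg (fun S : Sylow p H => Subgroup.map H.subtype (S : Subgroup H)) h12
      simp only [Sylow.coe_subtype, Subgroup.subgroupOf_map_subtype] at h12'
      rw [inf_eq_left.2 h1, inf_eq_left.2 h2] at h12'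
      exact Subtype.ext (Sylow.ext h12')
    · intro S
      obtain ⟨h, hh⟩ := MulAction.exists_smul_eq H (P.subtype hPH) S
      refine ⟨⟨(h : G) • P, ?_⟩, ?_⟩
      · rw [Sylow.coe_subgroup_smul]
        exact Subgroup.conj_smul_le_of_le hPH h
      · apply Sylow.ext
        rw [Sylow.coe_subtype, Sylow.coe_subgroup_smul, ← Subgroup.conj_smul_subgroupOf hPH h,
          ← hh, Sylow.coe_subgroup_smul, Sylow.coe_subtype]
  have count2 : Nat.card {x : Ωt × Sylow p G // (x.2 : Subgroup G) ≤ (x.1 : Subgroup G)} =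
      Nat.card Ωt * Nat.card (Sylow p H) := by
    refine card_rel_const
      (fun (K : Ωt) (Q : Sylow p G) => (Q : Subgroup G) ≤ (K : Subgroup G)) _ (fun K => ?_)
    obtain ⟨g, hg⟩ := K.2
    have e1 : {Q : Sylow p G // (Q : Subgroup G) ≤ (K : Subgroup G)} ≃
        {Q : Sylow p G // (Q : Subgroup G) ≤ H} := by
      refine Equiv.subtypeEquiv (MulAction.toPerm g⁻¹) (fun Q => ?_)
      simp only [MulAction.toPerm_apply]
      rw [Sylow.coe_subgroup_smul, hg, map_inv]
      constructor
      · intro hle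
        have := Subgroup.pointwise_smul_le_pointwise_smul_iff
          (a := (MulAut.conj g)⁻¹) (S := (Q : Subgroup G)) (T := MulAut.conj g • H) |>.2 hle
        rwa [inv_smul_smul] at this
      · intro hle
        have := Subgroup.pointwise_smul_le_pointwise_smul_iff
          (a := MulAut.conj g) (S := (MulAut.conj g)⁻¹ • (Q : Subgroup G)) (T := H) |>.2 hle
        rwa [smul_inv_smul] at this
    rw [Nat.card_congr e1, Nat.card_congr eSylH]
  -- Step E: assemble
  have hset : {K : Subgroup G |
      (∃ g : G, K = Subgroup.map (MulAut.conj g).toMonoidHom H) ∧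
      ∀ x ∈ (P : Subgroup G), Subgroup.map (MulAut.conj x).toMonoidHom K = K} =
      {K : Subgroup G | inΩ K ∧ (P : Subgroup G) ≤ K} :=
    Set.ext fun K => and_congr_right fun hK => fix_iff K hK
  rw [hset]
  have eB : {x : Sylow p G × Ωt // (x.1 : Subgroup G) ≤ (x.2 : Subgroup G)} ≃
      {x : Ωt × Sylow p G // (x.2 : Subgroup G) ≤ (x.1 : Subgroup G)} :=
    ⟨fun a => ⟨(a.1.2, a.1.1), a.2⟩, fun a => ⟨(a.1.2, a.1.1), a.2⟩, fun _ => rfl, fun _ => rfl⟩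
  have hmain : Nat.card (Sylow p G) * Nat.card {K : Subgroup G // inΩ K ∧ (P : Subgroup G) ≤ K}
      = Nat.card Ωt * Nat.card (Sylow p H) := by
    rw [← count1, Nat.card_congr eB, count2]
  exact hmain.trans (mul_comm _ _)
end

section
/- Let p be a prime and let G be a nontrivial finite group generated by its p-elements. If H_1, …, H_k are proper subgroups of G whose union contains every p-element of G, then k ≥ p+1. (Equivalently, σ_p(G) ≥ p+1, where σ_p(G) is the minimal number of proper subgroups of G needed to cover the set of p-elements of G.) -/
open scoped Pointwise

namespace Stmt15

/-- The set of `p`-elements. -/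
def PSet (p : ℕ) (G : Type) [Group G] : Set G := {x : G | ∃ n : ℕ, orderOf x = p ^ n}

variable {p : ℕ}

section Basic

variable {G : Type} [Group G]

lemma mem_conj_smul {g x : G} {K : Subgroup G} :
    x ∈ MulAut.conj g • K ↔ g⁻¹ * x * g ∈ K := by
  rw [Subgroup.mem_pointwise_smul_iff_inv_smul_mem]; simp [MulAut.smul_def]

lemma conj_smul_le_iff {g : G} {K L : Subgroup G} :
    MulAut.conj g • K ≤ L ↔ K ≤ MulAut.conj g⁻¹ • L := by
  constructor
  · intro h
    have h2 := Subgroup.pointwise_smul_le_pointwise_smul_iff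
      (a := (MulAut.conj g)⁻¹) (S := MulAut.conj g • K) (T := L) |>.mpr h
    rwa [inv_smul_smul, ← map_inv MulAut.conj] at h2
  · intro h
    have h2 := Subgroup.pointwise_smul_le_pointwise_smul_iff
      (a := MulAut.conj g) (S := K) (T := MulAut.conj g⁻¹ • L) |>.mpr h
    rwa [map_inv MulAut.conj, smul_inv_smul] at h2

/-- conjugation by a member fixes the subgroup -/
lemma conj_smul_self {u : G} {K : Subgroup G} (hu : u ∈ K) : MulAut.conj u • K = K := by
  ext x
  rw [mem_conj_smul]
  constructor
  · intro h
    have := mul_mem (mul_mem hu h) (inv_mem hu)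
    simpa [mul_assoc] using this
  · intro h
    exact mul_mem (mul_mem (inv_mem hu) h) hu

lemma orderOf_conj_eq (g x : G) : orderOf (g * x * g⁻¹) = orderOf x := by
  have := orderOf_injective (MulAut.conj g).toMonoidHom
    (MulEquiv.injective (MulAut.conj g)) x
  simpa [MulAut.conj_apply] using this

lemma pset_conj {g x : G} (hx : x ∈ PSet p G) : g * x * g⁻¹ ∈ PSet p G := by
  obtain ⟨n, hn⟩ := hx
  exact ⟨n, by rw [orderOf_conj_eq]; exact hn⟩

/-- Elements of a `p`-group (as subgroup) are `p`-elements. -/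
lemma pset_of_pgroup {K : Subgroup G} (hK : IsPGroup p K) (hp : p.Prime)
    {x : G} (hx : x ∈ K) : x ∈ PSet p G := by
  obtain ⟨n, hn⟩ := hK ⟨x, hx⟩
  have hx1 : x ^ p ^ n = 1 := by
    have := congrArg (Subtype.val) hn
    simpa using this
  obtain ⟨m, _, hm⟩ := (Nat.dvd_prime_pow hp).mp (orderOf_dvd_of_pow_eq_one hx1)
  exact ⟨m, hm⟩

end Basic

section FiniteG

set_option linter.unusedSectionVars false

variable {G : Type} [Group G] [Finite G]

/-- Quotient-kill lemma: a normal subgroup of index coprime to `p` in a group generated by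
`p`-elements is the whole group. -/
lemma normal_eq_top (hp : p.Prime) (hgen : Subgroup.closure (PSet p G) = ⊤)
    (N : Subgroup G) [hN : N.Normal] (hidx : ¬ p ∣ N.index) : N = ⊤ := by
  set π := QuotientGroup.mk' N with hπ
  have hker : ∀ x ∈ PSet p G, π x = 1 := by
    rintro x ⟨n, hn⟩
    have h1 : orderOf (π x) ∣ p ^ n := hn ▸ orderOf_map_dvd π x
    have h2 : orderOf (π x) ∣ N.index := by
      rw [Subgroup.index_eq_card]; exact orderOf_dvd_natCard (π x)
    have hco : Nat.Coprime (p ^ n) N.index :=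
      Nat.Coprime.pow_left n ((Nat.Prime.coprime_iff_not_dvd hp).mpr hidx)
    have : orderOf (π x) ∣ 1 := by
      have := Nat.dvd_gcd h1 h2
      rwa [Nat.Coprime.gcd_eq_one hco] at this
    exact orderOf_eq_one_iff.mp (Nat.eq_one_of_dvd_one this)
  have hmapbot : Subgroup.map π ⊤ = ⊥ := by
    rw [← hgen, MonoidHom.map_closure]
    rw [eq_bot_iff]
    apply (Subgroup.closure_le ⊥).mpr
    rintro y ⟨x, hx, rfl⟩
    simpa [Subgroup.mem_bot] using hker x hx
  have hmaptop : Subgroup.map π ⊤ = ⊤ :=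
    Subgroup.map_top_of_surjective π (QuotientGroup.mk'_surjective N)
  have hbt : (⊥ : Subgroup (G ⧸ N)) = ⊤ := by rw [← hmapbot, hmaptop]
  have hsub : Subsingleton (G ⧸ N) := by
    constructor
    intro a b
    have ha : a ∈ (⊥ : Subgroup (G ⧸ N)) := by rw [hbt]; exact Subgroup.mem_top a
    have hb : b ∈ (⊥ : Subgroup (G ⧸ N)) := by rw [hbt]; exact Subgroup.mem_top b
    rw [Subgroup.mem_bot.mp ha, Subgroup.mem_bot.mp hb]
  apply Subgroup.index_eq_one.mp
  rw [Subgroup.index_eq_card]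
  exact Nat.card_eq_one_iff_unique.mpr ⟨hsub, ⟨(1 : G ⧸ N)⟩⟩

/-- Transfer of generation to a subgroup. -/
lemma sgood_transfer (L : Subgroup G)
    (h : Subgroup.closure {x : G | x ∈ L ∧ x ∈ PSet p G} = L) :
    Subgroup.closure (PSet p ↥L) = ⊤ := by
  apply Subgroup.map_injective L.subtype_injective
  rw [MonoidHom.map_closure]
  have himg : L.subtype '' (PSet p ↥L) = {x : G | x ∈ L ∧ x ∈ PSet p G} := by
    ext x
    constructor
    · rintro ⟨y, ⟨n, hn⟩, rfl⟩
      refine ⟨y.2, n, ?_⟩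
      rw [← hn]
      exact orderOf_injective L.subtype L.subtype_injective y
    · rintro ⟨hxL, n, hn⟩
      refine ⟨⟨x, hxL⟩, ⟨n, ?_⟩, rfl⟩
      rw [← hn]
      exact (orderOf_injective L.subtype L.subtype_injective ⟨x, hxL⟩).symm
  rw [himg, h, ← MonoidHom.range_eq_map, Subgroup.range_subtype]

/-- Sylow subgroups have index coprime to p. -/
lemma sylow_not_dvd_index (hp : p.Prime) (Q : Sylow p G) :
    ¬ p ∣ (Q : Subgroup G).index := by
  haveI := Fact.mk hp
  intro hdvd
  have hcard : Nat.card ↥(Q : Subgroup G) = p ^ (Nat.card G).factorization p :=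
    Sylow.card_eq_multiplicity Q
  have h1 : p ^ ((Nat.card G).factorization p + 1) ∣ Nat.card G := by
    rw [pow_succ, ← hcard]
    exact mul_dvd_mul (dvd_refl _) hdvd |>.trans
      (by rw [Subgroup.card_mul_index])
  exact Nat.pow_succ_factorization_not_dvd Nat.card_pos.ne' hp h1

end FiniteG

end Stmt15

namespace Stmt15

set_option maxHeartbeats 1000000 in
theorem key (p : ℕ) (hp : p.Prime) (n : ℕ) :
    ∀ (G : Type) [Group G] [Finite G] [Nontrivial G],
    Nat.card G ≤ n →
    Subgroup.closure (PSet p G) = ⊤ →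
    ∀ (k : ℕ) (H : Fin k → Subgroup G), (∀ i, H i ≠ ⊤) →
    (∀ x : G, x ∈ PSet p G → ∃ i, x ∈ H i) → p + 1 ≤ k := by
  induction n with
  | zero =>
    intro G _ _ _ hcard
    have := Nat.card_pos (α := G)
    omega
  | succ n IH =>
    intro G _ _ _ hcard hgen k H hprop hcov
    by_contra hk'
    have hk : k ≤ p := by omega
    classical
    haveI := Fact.mk hp
    -- p divides the order of G
    have hpdvd : p ∣ Nat.card G := by
      by_contra hnd
      have hsub : PSet p G ⊆ {(1 : G)} := by
        rintro x ⟨m, hm⟩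
        rcases Nat.eq_zero_or_pos m with hm0 | hmpos
        · subst hm0
          simp only [pow_zero] at hm
          simpa using orderOf_eq_one_iff.mp hm
        · exfalso
          apply hnd
          have h1 : p ∣ p ^ m := dvd_pow_self p hmpos.ne'
          have h2 : orderOf x ∣ Nat.card G := orderOf_dvd_natCard x
          exact (hm ▸ h1).trans h2
      have htle : (⊤ : Subgroup G) ≤ ⊥ := by
        rw [← hgen]
        apply (Subgroup.closure_le ⊥).mpr
        intro x hx
        simpa [Subgroup.mem_bot] using hsub hx
      obtain ⟨x, y, hxy⟩ := exists_pair_ne G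
      have hx := Subgroup.mem_bot.mp (htle (Subgroup.mem_top x))
      have hy := Subgroup.mem_bot.mp (htle (Subgroup.mem_top y))
      exact hxy (hx.trans hy.symm)
    obtain ⟨P₀⟩ := (Sylow.nonempty (p := p) (G := G))
    have hSylP : ∀ (Q : Sylow p G), ∀ x ∈ (Q : Subgroup G), x ∈ PSet p G :=
      fun Q x hx => pset_of_pgroup Q.2 hp hx
    have hSylnb : ∀ Q : Sylow p G, (Q : Subgroup G) ≠ ⊥ := by
      intro Q hbot
      have hcardQ := Sylow.card_eq_multiplicity Q
      rw [hbot] at hcardQ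
      have h1 : (1 : ℕ) = p ^ (Nat.card G).factorization p := by
        simpa using hcardQ
      have hpos := hp.factorization_pos_of_dvd Nat.card_pos.ne' hpdvd
      have h2 : 1 < p ^ (Nat.card G).factorization p :=
        Nat.one_lt_pow hpos.ne' hp.one_lt
      omega
    by_cases hPT : (P₀ : Subgroup G) = ⊤
    · -- Case A : G is a p-group
      have hall : ∀ x : G, x ∈ PSet p G := fun x =>
        pset_of_pgroup P₀.2 hp (by rw [hPT]; exact Subgroup.mem_top x)
      haveI : Fintype G := Fintype.ofFinite G
      have hGpg : IsPGroup p G := by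
        intro x
        obtain ⟨m, hm⟩ := hall x
        exact ⟨m, by rw [← hm]; exact pow_orderOf_eq_one x⟩
      obtain ⟨nn, hnn⟩ := IsPGroup.iff_card.mp hGpg
      have hHle : ∀ i, p * Nat.card ↥(H i) ≤ Nat.card G := by
        intro i
        have hmul := Subgroup.card_mul_index (H i)
        have hidvd : (H i).index ∣ p ^ nn := by
          rw [← hnn]
          exact ⟨Nat.card ↥(H i), by rw [← hmul, mul_comm]⟩
        obtain ⟨j, hjnn, hj2⟩ := (Nat.dvd_prime_pow hp).mp hidvd
        have hj1 : 1 ≤ j := by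
          by_contra h0
          have hj0 : j = 0 := by omega
          rw [hj0, pow_zero] at hj2
          exact hprop i (Subgroup.index_eq_one.mp hj2)
        have hple : p ≤ (H i).index := by
          rw [hj2]
          calc p = p ^ 1 := (pow_one p).symm
            _ ≤ p ^ j := Nat.pow_le_pow_right hp.pos hj1
        calc p * Nat.card ↥(H i) ≤ (H i).index * Nat.card ↥(H i) :=
              Nat.mul_le_mul_right _ hple
          _ = Nat.card G := by rw [mul_comm]; exact hmul
      obtain ⟨m, hmeq⟩ := hpdvd
      obtain ⟨m', rfl⟩ : ∃ m', m = m' + 1 := by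
        refine ⟨m - 1, ?_⟩
        have : m ≠ 0 := by
          rintro rfl
          rw [mul_zero] at hmeq
          have := Nat.card_pos (α := G)
          omega
        omega
      have hcov' : (Finset.univ.erase (1 : G)) ⊆
          Finset.univ.biUnion (fun i : Fin k => ((H i : Set G).toFinset.erase (1 : G))) := by
        intro x hx
        have hx1 : x ≠ 1 := Finset.ne_of_mem_erase hx
        obtain ⟨i, hi⟩ := hcov x (hall x)
        exact Finset.mem_biUnion.mpr ⟨i, Finset.mem_univ i,
          Finset.mem_erase.mpr ⟨hx1, Set.mem_toFinset.mpr hi⟩⟩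
      have hcard1 : (Finset.univ.erase (1 : G)).card = Nat.card G - 1 := by
        rw [Finset.card_erase_of_mem (Finset.mem_univ _), Finset.card_univ,
          Nat.card_eq_fintype_card]
      have hcard2 : ∀ i : Fin k, ((H i : Set G).toFinset.erase (1 : G)).card
          = Nat.card ↥(H i) - 1 := by
        intro i
        rw [Finset.card_erase_of_mem (Set.mem_toFinset.mpr (H i).one_mem),
          Set.toFinset_card]
        simp only [SetLike.coe_sort_coe, Nat.card_eq_fintype_card]
      have hterm : ∀ i : Fin k, ((H i : Set G).toFinset.erase (1 : G)).card ≤ m' := by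
        intro i
        rw [hcard2 i]
        have h1 := hHle i
        rw [hmeq] at h1
        have h2 : Nat.card ↥(H i) ≤ m' + 1 := Nat.le_of_mul_le_mul_left h1 hp.pos
        omega
      have hsum : ∑ i : Fin k, ((H i : Set G).toFinset.erase (1 : G)).card ≤ k * m' := by
        calc ∑ i : Fin k, ((H i : Set G).toFinset.erase (1 : G)).card
            ≤ (Finset.univ : Finset (Fin k)).card • m' :=
              Finset.sum_le_card_nsmul _ _ _ (fun i _ => hterm i)
          _ = k * m' := by rw [Finset.card_univ, Fintype.card_fin, smul_eq_mul]
      have hchain : Nat.card G - 1 ≤ k * m' := by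
        rw [← hcard1]
        exact (Finset.card_le_card hcov').trans (Finset.card_biUnion_le.trans hsum)
      have hkm : k * m' ≤ p * m' := Nat.mul_le_mul_right _ hk
      have hGm : Nat.card G = p * m' + p := by rw [hmeq]; ring
      have hp2 := hp.two_le
      omega
    · -- Case B : G is not a p-group
      set PS := PSet p G with hPS
      set SS : Set (Subgroup G) :=
        {L | Subgroup.closure {x : G | x ∈ L ∧ x ∈ PS} = L ∧ L ≠ ⊤ ∧
          ∃ Q : Sylow p G, (Q : Subgroup G) ≤ L} with hSSdef
      have hP0SS : (P₀ : Subgroup G) ∈ SS := by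
        refine ⟨?_, hPT, ⟨P₀, le_refl _⟩⟩
        have hset : {x : G | x ∈ (P₀ : Subgroup G) ∧ x ∈ PS}
            = ((P₀ : Subgroup G) : Set G) := by
          ext x
          exact ⟨fun h => h.1, fun h => ⟨h, hSylP P₀ x h⟩⟩
        rw [hset, Subgroup.closure_eq]
      -- (i) every member of SS is inside some H i
      have hLE : ∀ L ∈ SS, ∃ i, L ≤ H i := by
        rintro L ⟨hLg, hLt, ⟨Q, hQL⟩⟩
        by_contra hno
        push_neg at hno
        haveI : Nontrivial ↥L := (Subgroup.nontrivial_iff_ne_bot L).mpr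
          (fun h => hSylnb Q (le_bot_iff.mp (h ▸ hQL)))
        have hcardL : Nat.card ↥L ≤ n := by
          have hdvd := Subgroup.card_subgroup_dvd_card L
          have hne : Nat.card ↥L ≠ Nat.card G := fun h => hLt (Subgroup.eq_top_of_card_eq L h)
          have hlt : Nat.card ↥L < Nat.card G :=
            lt_of_le_of_ne (Nat.le_of_dvd Nat.card_pos hdvd) hne
          omega
        have hthis := IH ↥L hcardL (sgood_transfer L hLg) k
          (fun i => (H i).subgroupOf L)
          (fun i htop => hno i ((Subgroup.subgroupOf_eq_top).mp htop))
          (by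
            intro y hy
            have hyG : (y : G) ∈ PS := by
              obtain ⟨m, hm⟩ := hy
              exact ⟨m, by rw [← hm]; exact orderOf_injective L.subtype L.subtype_injective y⟩
            obtain ⟨i, hi⟩ := hcov y hyG
            exact ⟨i, Subgroup.mem_subgroupOf.mpr hi⟩)
        omega
      -- conjugation stability of SS
      have hconjSS : ∀ (g : G), ∀ L ∈ SS, MulAut.conj g • L ∈ SS := by
        rintro g L ⟨hLg, hLt, ⟨Q, hQL⟩⟩
        refine ⟨?_, ?_, ?_⟩
        · have himg : {x : G | x ∈ MulAut.conj g • L ∧ x ∈ PS}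
              = (MulAut.conj g).toMonoidHom '' {x : G | x ∈ L ∧ x ∈ PS} := by
            ext x
            constructor
            · rintro ⟨hx1, hx2⟩
              refine ⟨g⁻¹ * x * g, ⟨mem_conj_smul.mp hx1, ?_⟩, ?_⟩
              · have := pset_conj (g := g⁻¹) hx2
                simpa using this
              · simp only [MulEquiv.coe_toMonoidHom, MulAut.conj_apply]
                group
            · rintro ⟨y, ⟨hy1, hy2⟩, rfl⟩
              simp only [MulEquiv.coe_toMonoidHom, MulAut.conj_apply]
              constructor
              · apply mem_conj_smul.mpr
                have hyy : g⁻¹ * (g * y * g⁻¹) * g = y := by group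
                rw [hyy]
                exact hy1
              · exact pset_conj hy2
          rw [himg, ← MonoidHom.map_closure, hLg]
          ext x
          rw [Subgroup.mem_map, mem_conj_smul]
          constructor
          · rintro ⟨y, hy, rfl⟩
            have hyy : g⁻¹ * ((MulAut.conj g).toMonoidHom y) * g = y := by
              simp only [MulEquiv.coe_toMonoidHom, MulAut.conj_apply]
              group
            rw [hyy]
            exact hy
          · intro hx
            refine ⟨g⁻¹ * x * g, hx, ?_⟩
            simp only [MulEquiv.coe_toMonoidHom, MulAut.conj_apply]
            group
        · intro htop
          apply hLt
          have h2 := congrArg (fun S => (MulAut.conj g)⁻¹ • S) htop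
          rw [inv_smul_smul] at h2
          rw [h2]
          ext x
          simp only [Subgroup.mem_top, iff_true]
          rw [Subgroup.mem_pointwise_smul_iff_inv_smul_mem]
          exact Subgroup.mem_top _
        · refine ⟨MulAut.conj g • Q, ?_⟩
          rw [Sylow.pointwise_smul_def]
          exact Subgroup.pointwise_smul_le_pointwise_smul_iff.mpr hQL
      -- no member of SS is normal
      have hnotnorm : ∀ K ∈ SS, ¬ K.Normal := by
        rintro K ⟨hKg, hKt, ⟨Q, hQK⟩⟩ hN
        haveI := hN
        apply hKt
        apply normal_eq_top hp hgen K
        intro hdvd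
        exact sylow_not_dvd_index hp Q (hdvd.trans (Subgroup.index_dvd_of_le hQK))
      -- a maximal member
      obtain ⟨K, hKSS, hKmax'⟩ := Set.Finite.exists_maximalFor id SS (Set.toFinite SS)
        ⟨(P₀ : Subgroup G), hP0SS⟩
      have hKmax : ∀ L ∈ SS, K ≤ L → K = L := fun L hL hKL => le_antisymm hKL (hKmax' hL hKL)
      have hconjMax : ∀ (g : G) (L : Subgroup G), L ∈ SS → MulAut.conj g • K ≤ L →
          MulAut.conj g • K = L := by
        intro g L hLSS hle
        have h1 : K ≤ MulAut.conj g⁻¹ • L := conj_smul_le_iff.mp hle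
        have h2 := hKmax _ (hconjSS g⁻¹ L hLSS) h1
        rw [h2, map_inv MulAut.conj, smul_inv_smul]
      -- (iii) p-elements of the normalizer of a conjugate of K lie in it
      have hNorm : ∀ (g : G), ∀ x ∈ Subgroup.normalizer ((MulAut.conj g • K : Subgroup G) : Set G), x ∈ PS →
          x ∈ MulAut.conj g • K := by
        intro g
        have hK'SS : MulAut.conj g • K ∈ SS := hconjSS g K hKSS
        obtain ⟨hK'g, hK't, ⟨Q', hQ'⟩⟩ := hK'SS
        intro x hxN hxP
        set K' := MulAut.conj g • K with hK'
        set X := Subgroup.closure {y : G | y ∈ (Subgroup.normalizer (K' : Set G)) ∧ y ∈ PS} with hX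
        have hXle : X ≤ (Subgroup.normalizer (K' : Set G)) := (Subgroup.closure_le _).mpr (fun y hy => hy.1)
        have hKX : K' ≤ X := by
          conv_lhs => rw [← hK'g]
          exact Subgroup.closure_mono (fun y hy => ⟨Subgroup.le_normalizer hy.1, hy.2⟩)
        have hXSS : X ∈ SS := by
          refine ⟨?_, ?_, ⟨Q', le_trans hQ' hKX⟩⟩
          · apply le_antisymm
            · exact (Subgroup.closure_le _).mpr (fun y hy => hy.1)
            · conv_lhs => rw [hX]
              exact Subgroup.closure_mono (fun y hy => ⟨Subgroup.subset_closure hy, hy.2⟩)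
          · intro hXtop
            have hnt : (Subgroup.normalizer (K' : Set G)) = ⊤ := top_le_iff.mp (hXtop ▸ hXle)
            exact hnotnorm K' ⟨hK'g, hK't, ⟨Q', hQ'⟩⟩ (Subgroup.normalizer_eq_top_iff.mp hnt)
        have hXK : MulAut.conj g • K = X := hconjMax g X hXSS hKX
        rw [hK', hXK]
        exact Subgroup.subset_closure ⟨hxN, hxP⟩
      -- (v) two conjugates of K inside a common H i coincide
      have htwo : ∀ (g₁ g₂ : G) (i : Fin k), MulAut.conj g₁ • K ≤ H i →
          MulAut.conj g₂ • K ≤ H i → MulAut.conj g₁ • K = MulAut.conj g₂ • K := by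
        intro g₁ g₂ i h1 h2
        obtain ⟨hg1, ht1, ⟨Q₁, hQ₁⟩⟩ := hconjSS g₁ K hKSS
        obtain ⟨hg2, ht2, _⟩ := hconjSS g₂ K hKSS
        set K₁ := MulAut.conj g₁ • K with hK₁
        set K₂ := MulAut.conj g₂ • K with hK₂
        set X := Subgroup.closure {y : G | y ∈ K₁ ⊔ K₂ ∧ y ∈ PS} with hX
        have hXle : X ≤ K₁ ⊔ K₂ := (Subgroup.closure_le _).mpr (fun y hy => hy.1)
        have hK₁X : K₁ ≤ X := by
          conv_lhs => rw [← hg1]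
          exact Subgroup.closure_mono (fun y hy => ⟨le_sup_left (α := Subgroup G) hy.1, hy.2⟩)
        have hK₂X : K₂ ≤ X := by
          conv_lhs => rw [← hg2]
          exact Subgroup.closure_mono (fun y hy => ⟨le_sup_right (α := Subgroup G) hy.1, hy.2⟩)
        have hXSS : X ∈ SS := by
          refine ⟨?_, ?_, ⟨Q₁, hQ₁.trans hK₁X⟩⟩
          · apply le_antisymm
            · exact (Subgroup.closure_le _).mpr (fun y hy => hy.1)
            · conv_lhs => rw [hX]
              exact Subgroup.closure_mono (fun y hy => ⟨Subgroup.subset_closure hy, hy.2⟩)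
          · intro hXtop
            exact hprop i (top_le_iff.mp (hXtop ▸ (hXle.trans (sup_le h1 h2))))
        have e1 := hconjMax g₁ X hXSS hK₁X
        have e2 := hconjMax g₂ X hXSS hK₂X
        rw [← hK₁, ← hK₂] at *
        rw [e1, e2]
      -- a conjugate of K not containing the Sylow subgroup of K
      obtain ⟨QK, hQK⟩ := hKSS.2.2
      have hmoved : ∃ g : G, ¬ (QK : Subgroup G) ≤ MulAut.conj g • K := by
        by_contra hall'
        push_neg at hall'
        have hconjsub : Group.conjugatesOfSet ((QK : Subgroup G) : Set G) ⊆ (K : Set G) := by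
          intro y hy
          obtain ⟨x, hx, hxy⟩ := Group.mem_conjugatesOfSet_iff.mp hy
          obtain ⟨c, hc⟩ := isConj_iff.mp hxy
          have hxm := hall' c⁻¹ hx
          rw [mem_conj_smul] at hxm
          rw [← hc]
          simpa using hxm
        have hNle : Subgroup.normalClosure ((QK : Subgroup G) : Set G) ≤ K :=
          (Subgroup.closure_le K).mpr hconjsub
        haveI : (Subgroup.normalClosure ((QK : Subgroup G) : Set G)).Normal :=
          Subgroup.normalClosure_normal
        have hQN : (QK : Subgroup G) ≤ Subgroup.normalClosure ((QK : Subgroup G) : Set G) :=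
          fun x hx => Subgroup.subset_normalClosure hx
        have htopN : Subgroup.normalClosure ((QK : Subgroup G) : Set G) = ⊤ := by
          apply normal_eq_top hp hgen
          intro hdvd
          exact sylow_not_dvd_index hp QK (hdvd.trans (Subgroup.index_dvd_of_le hQN))
        exact hKSS.2.1 (top_le_iff.mp (htopN ▸ hNle))
      obtain ⟨g₀, hg₀⟩ := hmoved
      set K' := MulAut.conj g₀ • K with hK'def
      letI actQK : MulAction ↥(QK : Subgroup G) (Subgroup G) :=
        MulAction.compHom _ (MulAut.conj.comp (QK : Subgroup G).subtype)
      have hsmul_def : ∀ (u : ↥(QK : Subgroup G)) (S : Subgroup G),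
          u • S = MulAut.conj (u : G) • S := fun u S => rfl
      set O := MulAction.orbit ↥(QK : Subgroup G) K' with hO
      have hOconj : ∀ T ∈ O, ∃ g : G, T = MulAut.conj g • K := by
        rintro T ⟨u, rfl⟩
        refine ⟨(u : G) * g₀, ?_⟩
        show u • K' = _
        rw [hsmul_def, hK'def, smul_smul, ← map_mul]
      have hcardO : Nat.card ↥O ∣ Nat.card ↥(QK : Subgroup G) := by
        have hequiv := MulAction.orbitEquivQuotientStabilizer ↥(QK : Subgroup G) K'
        rw [Nat.card_congr hequiv, ← Subgroup.index_eq_card]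
        exact ⟨Nat.card ↥(MulAction.stabilizer ↥(QK : Subgroup G) K'),
          by rw [mul_comm, Subgroup.card_mul_index]⟩
      obtain ⟨f, hf⟩ : ∃ f, Nat.card ↥(QK : Subgroup G) = p ^ f :=
        ⟨_, Sylow.card_eq_multiplicity QK⟩
      rw [hf] at hcardO
      obtain ⟨j, hjf, hj⟩ := (Nat.dvd_prime_pow hp).mp hcardO
      have hone : Nat.card ↥O ≠ 1 := by
        intro h1
        have hsingle : O = {K'} := by
          obtain ⟨a, ha⟩ := Set.ncard_eq_one.mp (by rw [← Nat.card_coe_set_eq, h1])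
          have hm : K' ∈ O := MulAction.mem_orbit_self K'
          rw [ha] at hm ⊢
          rw [Set.mem_singleton_iff.mp hm]
        have hfix : ∀ u : ↥(QK : Subgroup G), MulAut.conj (u : G) • K' = K' := by
          intro u
          have hm : u • K' ∈ O := MulAction.mem_orbit_iff.mpr ⟨u, rfl⟩
          rw [hsingle] at hm
          rw [← hsmul_def]
          exact Set.mem_singleton_iff.mp hm
        have hQnorm : (QK : Subgroup G) ≤ (Subgroup.normalizer (K' : Set G)) := by
          intro x hx
          rw [Subgroup.mem_normalizer_iff]
          intro h
          constructor
          · intro hh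
            rw [← hfix ⟨x, hx⟩, mem_conj_smul]
            have hsimp : x⁻¹ * (x * h * x⁻¹) * x = h := by group
            rw [hsimp]
            exact hh
          · intro hh
            rw [← hfix ⟨x, hx⟩, mem_conj_smul] at hh
            have hsimp : x⁻¹ * (x * h * x⁻¹) * x = h := by group
            rwa [hsimp] at hh
        have hsub2 : (QK : Subgroup G) ≤ K' := fun x hx =>
          hNorm g₀ x (hQnorm hx) (hSylP QK x hx)
        exact hg₀ hsub2
      have hjpos : 1 ≤ j := by
        by_contra h0
        have : j = 0 := by omega
        rw [this, pow_zero] at hj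
        exact hone hj
      have hOcard_ge : p ≤ Nat.card ↥O := by
        rw [hj]
        calc p = p ^ 1 := (pow_one p).symm
          _ ≤ p ^ j := Nat.pow_le_pow_right hp.pos hjpos
      have hKnotO : K ∉ O := by
        rintro ⟨u, hu⟩
        have hu' : MulAut.conj (u : G) • K' = K := hu
        apply hg₀
        have hK'eq : K' = MulAut.conj ((u : G))⁻¹ • K := by
          rw [← hu', map_inv, inv_smul_smul]
        rw [hK'eq]
        intro x hx
        rw [mem_conj_smul]
        have hsimp : ((u : G))⁻¹⁻¹ * x * ((u : G))⁻¹ = (u : G) * x * ((u : G))⁻¹ := by group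
        rw [hsimp]
        exact hQK (mul_mem (mul_mem u.2 hx) (inv_mem u.2))
      set T : Set (Subgroup G) := insert K O with hT
      have hTconj : ∀ S ∈ T, ∃ g : G, S = MulAut.conj g • K := by
        intro S hS
        rcases Set.mem_insert_iff.mp hS with rfl | hSO
        · exact ⟨1, by rw [map_one, one_smul]⟩
        · exact hOconj S hSO
      have hTH : ∀ S, S ∈ T → ∃ i, S ≤ H i := by
        intro S hS
        obtain ⟨g, rfl⟩ := hTconj S hS
        exact hLE _ (hconjSS g K hKSS)
      choose ι hι using hTH
      have hinj : Function.Injective (fun S : ↥T => ι S.1 S.2) := by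
        intro S₁ S₂ heq
        simp only at heq
        obtain ⟨g₁, hg₁⟩ := hTconj S₁.1 S₁.2
        obtain ⟨g₂, hg₂⟩ := hTconj S₂.1 S₂.2
        apply Subtype.ext
        rw [hg₁, hg₂]
        apply htwo g₁ g₂ (ι S₁.1 S₁.2)
        · rw [← hg₁]; exact hι S₁.1 S₁.2
        · rw [← hg₂, heq]; exact hι S₂.1 S₂.2
      have hcardT : Nat.card ↥T ≤ k := by
        have hle := Nat.card_le_card_of_injective _ hinj
        simpa using hle
      have hcardT' : p + 1 ≤ Nat.card ↥T := by
        rw [Nat.card_coe_set_eq, hT, Set.ncard_insert_of_notMem hKnotO (Set.toFinite O)]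
        have hOn : p ≤ O.ncard := by
          rw [← Nat.card_coe_set_eq]
          exact hOcard_ge
        omega
      omega

end Stmt15

/-- let `p` be a prime and `G` a nontrivial finite group generated by its
`p`-elements. If `H 1, …, H k` are proper subgroups of `G` whose union contains every
`p`-element of `G`, then `k ≥ p + 1`. -/
theorem stmt15 (p : ℕ) (hp : p.Prime) (G : Type) [Group G] [Finite G] [Nontrivial G]
    (hgen : Subgroup.closure {x : G | ∃ n : ℕ, orderOf x = p ^ n} = ⊤)
    (k : ℕ) (H : Fin k → Subgroup G) (hprop : ∀ i, H i ≠ ⊤)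
    (hcov : ∀ x : G, (∃ n : ℕ, orderOf x = p ^ n) → ∃ i, x ∈ H i) :
    p + 1 ≤ k :=
  Stmt15.key p hp (Nat.card G) G le_rfl hgen k H hprop hcov
end

section
/- For all positive integers m and n there exists a bound B such that for every set of primes π and every finite group G the following holds: if for all subsets S₁, S₂ of the set G_π of π-elements of G with |S₁| = m and |S₂| = n there exist x ∈ S₁ and y ∈ S₂ with xy = yx, and if the π-part of |G| exceeds B, then G possesses an abelian Hall π-subgroup. -/
open Finset

namespace Stmt19Aux

attribute [local instance] Classical.propDecidable

variable {G : Type} [Group G] [Fintype G]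

/-- the predicate of being a `π`-element -/
def piPred (π : Set ℕ) (x : G) : Prop := ∀ q : ℕ, q.Prime → q ∣ orderOf x → q ∈ π

/-- the set of elements of `P` not commuting with `y` -/
noncomputable def Npr (P : Finset G) (y : G) : Finset G := P.filter (fun z => ¬ Commute z y)

/-- the set of elements of `P` commuting with `y` -/
noncomputable def Cpr (P : Finset G) (y : G) : Finset G := P.filter (fun z => Commute z y)

/-- the key numerical constant -/
def N0 (m n : ℕ) : ℕ := 12 * (m * m) + 18 * m + n + 100 + 6 * (m * (n * Nat.choose (6 * m) m))

variable {π : Set ℕ} {P : Finset G}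

lemma card_split (P : Finset G) (y : G) : (Cpr P y).card + (Npr P y).card = P.card := by
  classical
  simpa [Cpr, Npr] using
    Finset.card_filter_add_card_filter_not (s := P) (p := fun z => Commute z y)

lemma mul_mem_P (hP : ∀ x : G, x ∈ P ↔ piPred π x) {u z : G} (hu : u ∈ P) (hz : z ∈ P)
    (h : Commute u z) : u * z ∈ P := by
  rw [hP] at hu hz ⊢
  intro q hq hdvd
  have h1 : orderOf (u * z) ∣ orderOf u * orderOf z :=
    (h.orderOf_mul_dvd_lcm).trans (Nat.lcm_dvd_mul _ _)
  rcases (Nat.Prime.dvd_mul hq).mp (hdvd.trans h1) with h2 | h2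
  · exact hu q hq h2
  · exact hz q hq h2

lemma conj_mem_P (hP : ∀ x : G, x ∈ P ↔ piPred π x) {x : G} (hx : x ∈ P) (g : G) :
    g * x * g⁻¹ ∈ P := by
  rw [hP] at hx ⊢
  intro q hq hdvd
  have horder : orderOf (g * x * g⁻¹) = orderOf x := by
    simpa using orderOf_injective (MulAut.conj g).toMonoidHom (MulEquiv.injective _) x
  exact hx q hq (by rwa [horder] at hdvd)

lemma pair_ineq (hP : ∀ x : G, x ∈ P ↔ piPred π x) {u v : G} (hu : u ∈ P) (hv : v ∈ P)
    (huv : ¬ Commute u v) : (Cpr P u).card ≤ 2 * (Npr P v).card := by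
  have hsub : Cpr P u ⊆ (Cpr P u ∩ Cpr P v) ∪ Npr P v := by
    intro z hz
    rcases Classical.em (Commute z v) with h | h
    · exact mem_union_left _ (mem_inter.mpr ⟨hz, mem_filter.mpr ⟨(mem_filter.mp hz).1, h⟩⟩)
    · exact mem_union_right _ (mem_filter.mpr ⟨(mem_filter.mp hz).1, h⟩)
  have h1 : (Cpr P u ∩ Cpr P v).card ≤ (Npr P v).card := by
    apply Finset.card_le_card_of_injOn (fun z => u * z)
    · intro z hz
      rcases mem_inter.mp hz with ⟨hz1, hz2⟩
      rcases mem_filter.mp hz1 with ⟨hzP, hzu⟩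
      rcases mem_filter.mp hz2 with ⟨-, hzv⟩
      refine mem_filter.mpr ⟨mul_mem_P hP hu hzP hzu.symm, ?_⟩
      intro hc
      apply huv
      have := hc.mul_left hzv.inv_left
      simpa [mul_assoc] using this
    · intro a _ b _ hab
      exact mul_left_cancel hab
  calc (Cpr P u).card ≤ ((Cpr P u ∩ Cpr P v) ∪ Npr P v).card := card_le_card hsub
    _ ≤ (Cpr P u ∩ Cpr P v).card + (Npr P v).card := card_union_le _ _
    _ ≤ (Npr P v).card + (Npr P v).card := Nat.add_le_add_right h1 _
    _ = 2 * (Npr P v).card := (two_mul _).symm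

/-- the set of high-degree vertices -/
noncomputable def hset (P : Finset G) : Finset G :=
  P.filter (fun v => P.card < 3 * (Npr P v).card + 3)

lemma edge_meets (hP : ∀ x : G, x ∈ P ↔ piPred π x) {u v : G} (hu : u ∈ P) (hv : v ∈ P)
    (huv : ¬ Commute u v) : u ∈ hset P ∨ v ∈ hset P := by
  by_contra hcon
  push_neg at hcon
  obtain ⟨h1, h2⟩ := hcon
  rw [hset, mem_filter, not_and] at h1 h2
  have h1' := h1 hu
  have h2' := h2 hv
  have e1 : (Cpr P u).card ≤ 2 * (Npr P v).card := pair_ineq hP hu hv huv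
  have e2 := card_split P u
  omega

lemma hset_small (m n : ℕ) (hm : 0 < m) (hn : 0 < n)
    (C1 : ∀ S₁ : Finset G, S₁ ⊆ P → S₁.card = m →
      (P.filter (fun y => ∀ x ∈ S₁, ¬ Commute x y)).card < n)
    (hbig : N0 m n < P.card) : (hset P).card < 6 * m := by
  by_contra hcon
  push_neg at hcon
  obtain ⟨U, hUsub, hUcard⟩ := Finset.exists_subset_card_eq hcon
  have hUP : U ⊆ P := hUsub.trans (filter_subset _ _)
  set c : G → ℕ := fun y => (U.filter (fun u => ¬ Commute u y)).card with hc
  -- the total sum of c over P equals the sum of degrees over U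
  have hsum : ∑ y ∈ P, c y = ∑ u ∈ U, (Npr P u).card := by
    have : ∀ y ∈ P, c y = ∑ u ∈ U, if ¬ Commute u y then 1 else 0 := by
      intro y _
      simpa [hc] using Finset.card_filter (fun u => ¬ Commute u y) U
    rw [Finset.sum_congr rfl this, Finset.sum_comm]
    apply Finset.sum_congr rfl
    intro u _
    have : ∑ y ∈ P, (if ¬ Commute u y then 1 else 0) = (P.filter (fun y => ¬ Commute u y)).card :=
      (Finset.card_filter _ _).symm
    rw [this]
    apply Finset.card_nbij' id id
    · intro a ha
      simp only [Npr, id, mem_filter, Finset.mem_coe] at ha ⊢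
      exact ⟨ha.1, fun hcom => ha.2 hcom.symm⟩
    · intro a ha
      simp only [Npr, id, mem_filter, Finset.mem_coe] at ha ⊢
      exact ⟨ha.1, fun hcom => ha.2 hcom.symm⟩
    · intro a _; rfl
    · intro a _; rfl
  -- lower bound on the sum of degrees over U
  have hlow : 6 * m * P.card ≤ 3 * (∑ u ∈ U, (Npr P u).card) + 2 * (6 * m) := by
    have h1 : ∀ u ∈ U, P.card ≤ 3 * (Npr P u).card + 2 := by
      intro u hu
      have := (mem_filter.mp (hUsub hu)).2
      omega
    calc 6 * m * P.card = ∑ _u ∈ U, P.card := by rw [Finset.sum_const, hUcard]; ring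
      _ ≤ ∑ u ∈ U, (3 * (Npr P u).card + 2) := Finset.sum_le_sum h1
      _ = 3 * (∑ u ∈ U, (Npr P u).card) + 2 * (6 * m) := by
          rw [Finset.sum_add_distrib, Finset.mul_sum, Finset.sum_const, hUcard]; ring
  -- the rich vertices
  set rich : Finset G := P.filter (fun y => m ≤ c y) with hrich
  have hchoice : ∀ y : G, m ≤ c y → ∃ S, S ⊆ U.filter (fun u => ¬ Commute u y) ∧ S.card = m :=
    fun y hy => Finset.exists_subset_card_eq hy
  set f : G → Finset G := fun y =>
    if hy : m ≤ c y then (hchoice y hy).choose else ∅ with hf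
  have hrichbound : rich.card ≤ (n - 1) * Nat.choose (6 * m) m := by
    have hmaps : ∀ y ∈ rich, f y ∈ U.powersetCard m := by
      intro y hy
      have hcy : m ≤ c y := (mem_filter.mp hy).2
      obtain ⟨hs, hcard⟩ := (hchoice y hcy).choose_spec
      rw [hf]
      simp only [dif_pos hcy]
      exact Finset.mem_powersetCard.mpr ⟨hs.trans (filter_subset _ _), hcard⟩
    have hfib : ∀ S ∈ U.powersetCard m, (rich.filter (fun y => f y = S)).card ≤ n - 1 := by
      intro S hS
      obtain ⟨hSU, hScard⟩ := Finset.mem_powersetCard.mp hS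
      have hsub2 : rich.filter (fun y => f y = S) ⊆
          P.filter (fun y => ∀ x ∈ S, ¬ Commute x y) := by
        intro y hy
        obtain ⟨hyrich, hyf⟩ := mem_filter.mp hy
        obtain ⟨hyP, hcy⟩ := mem_filter.mp hyrich
        refine mem_filter.mpr ⟨hyP, ?_⟩
        intro x hx
        obtain ⟨hs, _⟩ := (hchoice y hcy).choose_spec
        have : x ∈ U.filter (fun u => ¬ Commute u y) := by
          apply hs
          rw [hf] at hyf
          simp only [dif_pos hcy] at hyf
          rwa [hyf]
        exact (mem_filter.mp this).2
      have := C1 S (hSU.trans hUP) hScard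
      have := card_le_card hsub2
      omega
    calc rich.card ≤ (n - 1) * (U.powersetCard m).card :=
          Finset.card_le_mul_card_image_of_maps_to hmaps (n - 1) hfib
      _ = (n - 1) * Nat.choose (6 * m) m := by rw [Finset.card_powersetCard, hUcard]
  -- upper bound on the total sum
  have hup : ∑ y ∈ P, c y ≤ rich.card * (6 * m) + P.card * (m - 1) := by
    have hsplit : ∑ y ∈ P, c y =
        ∑ y ∈ rich, c y + ∑ y ∈ P.filter (fun y => ¬ m ≤ c y), c y := by
      rw [hrich]
      exact (Finset.sum_filter_add_sum_filter_not P _ c).symm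
    rw [hsplit]
    have h1 : ∑ y ∈ rich, c y ≤ rich.card * (6 * m) := by
      apply Finset.sum_le_card_nsmul
      intro y _
      calc c y ≤ U.card := Finset.card_filter_le _ _
        _ = 6 * m := hUcard
    have h2 : ∑ y ∈ P.filter (fun y => ¬ m ≤ c y), c y ≤ P.card * (m - 1) := by
      calc ∑ y ∈ P.filter (fun y => ¬ m ≤ c y), c y
          ≤ (P.filter (fun y => ¬ m ≤ c y)).card * (m - 1) := by
            apply Finset.sum_le_card_nsmul
            intro y hy
            have := (mem_filter.mp hy).2
            omega
        _ ≤ P.card * (m - 1) := Nat.mul_le_mul_right _ (card_filter_le _ _)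
    omega
  -- final arithmetic contradiction
  set T := ∑ y ∈ P, c y
  set R := rich.card
  set Pc := P.card
  set Cc := Nat.choose (6 * m) m
  rw [← hsum] at hlow
  have e2 : Pc * m = Pc * (m - 1) + Pc := by
    have h1 : m - 1 + 1 = m := Nat.succ_pred_eq_of_pos hm
    calc Pc * m = Pc * (m - 1 + 1) := by rw [h1]
      _ = Pc * (m - 1) + Pc := by ring
  have k1 : 6 * (Pc * (m - 1)) + 6 * Pc ≤ 3 * T + 12 * m := by
    have h6 : 6 * m * Pc = 6 * (Pc * (m - 1)) + 6 * Pc := by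
      calc 6 * m * Pc = 6 * (Pc * m) := by ring
        _ = 6 * (Pc * (m - 1) + Pc) := by rw [e2]
        _ = 6 * (Pc * (m - 1)) + 6 * Pc := by ring
    omega
  have k2 : 3 * T ≤ 18 * (R * m) + 3 * (Pc * (m - 1)) := by
    calc 3 * T ≤ 3 * (R * (6 * m) + Pc * (m - 1)) := Nat.mul_le_mul_left _ hup
      _ = 18 * (R * m) + 3 * (Pc * (m - 1)) := by ring
  have k3 : R * m ≤ m * (n * Cc) := by
    calc R * m ≤ ((n - 1) * Cc) * m := Nat.mul_le_mul_right _ hrichbound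
      _ ≤ (n * Cc) * m := Nat.mul_le_mul_right _ (Nat.mul_le_mul_right _ (Nat.sub_le _ _))
      _ = m * (n * Cc) := by ring
  have hN0 : N0 m n = 12 * (m * m) + 18 * m + n + 100 + 6 * (m * (n * Cc)) := rfl
  rw [hN0] at hbig
  omega

lemma subgroup_le_P (hP : ∀ x : G, x ∈ P ↔ piPred π x) (H : Subgroup G)
    (hH : ∀ x : G, x ∈ H → piPred π x) : Nat.card H ≤ P.card := by
  classical
  have hsub : (H : Set G).toFinset ⊆ P := by
    intro x hx
    rw [Set.mem_toFinset] at hx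
    exact (hP x).mpr (hH x hx)
  calc Nat.card H = (H : Set G).toFinset.card := by
        rw [Set.toFinset_card, Nat.card_eq_fintype_card]
        rfl
  _ ≤ P.card := card_le_card hsub

lemma no_edge (m n : ℕ) (hm : 0 < m) (hn : 0 < n)
    (hP : ∀ x : G, x ∈ P ↔ piPred π x)
    (C1 : ∀ S₁ : Finset G, S₁ ⊆ P → S₁.card = m →
      (P.filter (fun y => ∀ x ∈ S₁, ¬ Commute x y)).card < n)
    {p : ℕ} (hp : p.Prime) (hpπ : p ∈ π)
    (hpbig : N0 m n < p ^ ((Nat.card G).factorization p)) :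
    ∀ u ∈ P, ∀ v ∈ P, Commute u v := by
  haveI := Fact.mk hp
  -- P is large
  have hbig : N0 m n < P.card := by
    obtain ⟨Q⟩ := Sylow.nonempty (p := p) (G := G)
    have hQcard : Nat.card Q = p ^ ((Nat.card G).factorization p) := Q.card_eq_multiplicity
    have hQP : ∀ x : G, x ∈ (Q : Subgroup G) → piPred π x := by
      intro x hx q hq hdvd
      have h1 : orderOf x ∣ Nat.card Q := Subgroup.orderOf_dvd_natCard _ hx
      rw [hQcard] at h1
      have : q ∣ p := hq.dvd_of_dvd_pow (hdvd.trans h1)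
      rwa [(Nat.prime_dvd_prime_iff_eq hq hp).mp this]
    calc N0 m n < p ^ ((Nat.card G).factorization p) := hpbig
      _ = Nat.card Q := hQcard.symm
      _ ≤ P.card := subgroup_le_P hP _ hQP
  intro u hu v hv
  by_contra hcom
  have hhsmall : (hset P).card < 6 * m := hset_small m n hm hn C1 hbig
  -- find a high-degree vertex
  obtain ⟨w, hwh⟩ : ∃ w, w ∈ hset P := by
    rcases edge_meets hP hu hv hcom with h | h
    · exact ⟨u, h⟩
    · exact ⟨v, h⟩
  obtain ⟨hwP, hwdeg⟩ := mem_filter.mp hwh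
  -- the degree of w is large
  have hdegw : 6 * m ≤ (Npr P w).card := by
    have : N0 m n = 12 * (m * m) + 18 * m + n + 100
        + 6 * (m * (n * Nat.choose (6 * m) m)) := rfl
    omega
  -- find a low-degree neighbour q of w
  obtain ⟨q, hqN, hqh⟩ : ∃ q ∈ Npr P w, q ∉ hset P := by
    by_contra hcon
    push_neg at hcon
    have hsub : Npr P w ⊆ hset P := hcon
    have := card_le_card hsub
    omega
  obtain ⟨hqP, hqw⟩ := mem_filter.mp hqN
  -- all neighbours of q are in hset
  have hdegq : (Npr P q).card ≤ (hset P).card := by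
    apply card_le_card
    intro z hz
    obtain ⟨hzP, hzq⟩ := mem_filter.mp hz
    rcases edge_meets hP hzP hqP hzq with h | h
    · exact h
    · exact absurd h hqh
  -- hence w has small "commuting set"
  have hcpw : (Cpr P w).card < 12 * m := by
    have h1 : (Cpr P w).card ≤ 2 * (Npr P q).card :=
      pair_ineq hP hwP hqP (fun hc => hqw hc.symm)
    omega
  -- the set of conjugates of w
  set Conj : Finset G := Finset.image (fun g : G => g * w * g⁻¹) Finset.univ with hConj
  by_cases hcase : m ≤ Conj.card
  · -- many conjugates: find m conjugates with many common "non-neighbours"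
    obtain ⟨S₁, hS₁sub, hS₁card⟩ := Finset.exists_subset_card_eq hcase
    have hS₁P : S₁ ⊆ P := by
      intro x hx
      obtain ⟨g, -, rfl⟩ := mem_image.mp (hS₁sub hx)
      exact conj_mem_P hP hwP g
    have hcpx : ∀ x ∈ S₁, (Cpr P x).card = (Cpr P w).card := by
      intro x hx
      obtain ⟨g, -, rfl⟩ := mem_image.mp (hS₁sub hx)
      apply le_antisymm
      · apply Finset.card_le_card_of_injOn (fun z => g⁻¹ * z * g)
        · intro z hz
          obtain ⟨hzP, hzc⟩ := mem_filter.mp hz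
          refine mem_filter.mpr ⟨?_, ?_⟩
          · have := conj_mem_P hP hzP g⁻¹
            simpa using this
          · have h2 := hzc.map (MulAut.conj g⁻¹).toMonoidHom
            simpa [mul_assoc] using h2
        · intro a _ b _ hab
          simp only at hab
          have := mul_right_cancel hab
          exact mul_left_cancel this
      · apply Finset.card_le_card_of_injOn (fun z => g * z * g⁻¹)
        · intro z hz
          obtain ⟨hzP, hzc⟩ := mem_filter.mp hz
          refine mem_filter.mpr ⟨conj_mem_P hP hzP g, ?_⟩
          have h2 := hzc.map (MulAut.conj g).toMonoidHom
          simpa [mul_assoc] using h2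
        · intro a _ b _ hab
          simp only at hab
          have := mul_right_cancel hab
          exact mul_left_cancel this
    have hTn : (P.filter (fun y => ∀ x ∈ S₁, ¬ Commute x y)).card < n := C1 S₁ hS₁P hS₁card
    set T := P.filter (fun y => ∀ x ∈ S₁, ¬ Commute x y) with hT
    have hcover : P \ T ⊆ S₁.biUnion (fun x => Cpr P x) := by
      intro y hy
      obtain ⟨hyP, hyT⟩ := mem_sdiff.mp hy
      rw [hT, mem_filter, not_and] at hyT
      have := hyT hyP
      push_neg at this
      obtain ⟨x, hx, hcomm⟩ := this
      exact Finset.mem_biUnion.mpr ⟨x, hx, mem_filter.mpr ⟨hyP, hcomm.symm⟩⟩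
    have hcard2 : P.card - T.card ≤ m * (Cpr P w).card := by
      have h1 : (P \ T).card = P.card - T.card := card_sdiff_of_subset (filter_subset _ _)
      have h2 : (P \ T).card ≤ ∑ x ∈ S₁, (Cpr P x).card :=
        (card_le_card hcover).trans card_biUnion_le
      have h3 : ∑ x ∈ S₁, (Cpr P x).card = m * (Cpr P w).card := by
        rw [Finset.sum_congr rfl hcpx, Finset.sum_const, hS₁card, smul_eq_mul]
      omega
    have hmul : m * (Cpr P w).card ≤ m * (12 * m) :=
      Nat.mul_le_mul_left _ (le_of_lt hcpw)
    have hmm : m * (12 * m) = 12 * (m * m) := by ring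
    have hN0 : N0 m n = 12 * (m * m) + 18 * m + n + 100
        + 6 * (m * (n * Nat.choose (6 * m) m)) := rfl
    omega
  · -- few conjugates: the centralizer of w is large, use a Sylow subgroup of it
    push_neg at hcase
    set Csub := Subgroup.centralizer {w} with hCsub
    have hwmem : ∀ c : G, c ∈ Csub ↔ w * c = c * w := by
      intro c
      rw [hCsub, Subgroup.mem_centralizer_iff]
      simp
    -- the index of the centralizer is at most the number of conjugates
    have hindex : Csub.index ≤ Conj.card := by
      rw [Subgroup.index_eq_card]
      have key : ∀ a c : G, w * c = c * w → (a * c) * w * (a * c)⁻¹ = a * w * a⁻¹ := by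
        intro a c h
        rw [mul_inv_rev, mul_assoc a c w, ← h]
        group
      let f : G ⧸ Csub → {x // x ∈ Conj} :=
        Quotient.lift (fun g => (⟨g * w * g⁻¹, mem_image_of_mem _ (mem_univ g)⟩ :
            {x // x ∈ Conj}))
          (by
            intro a b hab
            have hab2 : a⁻¹ * b ∈ Csub := QuotientGroup.leftRel_apply.mp hab
            have hcomm : w * (a⁻¹ * b) = (a⁻¹ * b) * w := (hwmem _).mp hab2
            apply Subtype.ext
            show a * w * a⁻¹ = b * w * b⁻¹
            have hb : b = a * (a⁻¹ * b) := by group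
            rw [hb, key a (a⁻¹ * b) hcomm])
      have hinj : Function.Injective f := by
        intro x y
        refine Quotient.inductionOn₂ x y ?_
        intro a b hab
        have h2 : a * w * a⁻¹ = b * w * b⁻¹ := congrArg Subtype.val hab
        apply Quotient.sound
        have h3 : w * (a⁻¹ * b) = (a⁻¹ * b) * w := by
          calc w * (a⁻¹ * b) = a⁻¹ * (a * w * a⁻¹) * b := by group
            _ = a⁻¹ * (b * w * b⁻¹) * b := by rw [h2]
            _ = (a⁻¹ * b) * w := by group
        exact (QuotientGroup.leftRel_apply).mpr ((hwmem _).mpr h3)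
      calc Nat.card (G ⧸ Csub) ≤ Nat.card {x // x ∈ Conj} :=
            Nat.card_le_card_of_injective f hinj
        _ = Conj.card := Nat.card_eq_finsetCard _
    have hind0 : Csub.index ≠ 0 := Subgroup.index_ne_zero_of_finite
    have hm2 : 2 ≤ m := by omega
    have hG0 : Nat.card G ≠ 0 := Nat.card_pos.ne'
    have hCmul : Nat.card Csub * Csub.index = Nat.card G := Subgroup.card_mul_index Csub
    have hC0 : Nat.card Csub ≠ 0 := Nat.card_pos.ne'
    set A := (Nat.card G).factorization p with hA
    set a := (Nat.card Csub).factorization p with ha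
    have hfact : A = a + (Csub.index).factorization p := by
      rw [hA, ← hCmul, Nat.factorization_mul hC0 hind0]
      simp
      rw [ha, Nat.card_eq_fintype_card]
    have hle : p ^ A ≤ p ^ a * Csub.index := by
      rw [hfact, pow_add]
      exact Nat.mul_le_mul_left _ (Nat.ordProj_le _ hind0)
    have hlt : p ^ A < p ^ a * m := by
      calc p ^ A ≤ p ^ a * Csub.index := hle
        _ < p ^ a * m := by
            have hpow : 0 < p ^ a := pow_pos hp.pos a
            exact mul_lt_mul_of_pos_left (lt_of_le_of_lt hindex hcase) hpow
    -- a Sylow p-subgroup of the centralizer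
    obtain ⟨Q⟩ := Sylow.nonempty (p := p) (G := ↥Csub)
    have hQcard : Nat.card Q = p ^ a := Q.card_eq_multiplicity
    have hQle : p ^ a ≤ (Cpr P w).card := by
      have helts : ∀ y : ↥Csub, y ∈ (Q : Subgroup ↥Csub) → (y : G) ∈ Cpr P w := by
        intro y hy
        refine mem_filter.mpr ⟨?_, ?_⟩
        · rw [hP]
          intro r hr hdvd
          have h1 : orderOf (y : G) = orderOf y := Subgroup.orderOf_coe y
          have h2 : orderOf y ∣ Nat.card Q := Subgroup.orderOf_dvd_natCard _ hy
          rw [hQcard] at h2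
          rw [h1] at hdvd
          have : r ∣ p := hr.dvd_of_dvd_pow (hdvd.trans h2)
          rwa [(Nat.prime_dvd_prime_iff_eq hr hp).mp this]
        · have := (hwmem (y : G)).mp y.2
          exact this.symm
      -- the image of Q in G
      set Q' : Subgroup G := Subgroup.map Csub.subtype (Q : Subgroup ↥Csub) with hQ'
      have hQ'card : Nat.card Q' = p ^ a := by
        rw [← hQcard]
        exact (Nat.card_congr (Subgroup.equivMapOfInjective (Q : Subgroup ↥Csub) Csub.subtype
          (Subgroup.subtype_injective Csub)).toEquiv).symm
      have hsub : (Q' : Set G).toFinset ⊆ Cpr P w := by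
        intro x hx
        rw [Set.mem_toFinset] at hx
        obtain ⟨y, hy, rfl⟩ := Subgroup.mem_map.mp hx
        exact helts y hy
      calc p ^ a = Nat.card Q' := hQ'card.symm
        _ = (Q' : Set G).toFinset.card := by
              rw [Set.toFinset_card, Nat.card_eq_fintype_card]; rfl
        _ ≤ (Cpr P w).card := card_le_card hsub
    -- contradiction: p ^ a > 12 m  but  Cpr P w < 12 m
    have h12 : 12 * m < p ^ a := by
      have hN0 : N0 m n = 12 * (m * m) + 18 * m + n + 100
          + 6 * (m * (n * Nat.choose (6 * m) m)) := rfl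
      have h1 : 12 * (m * m) < p ^ A := by omega
      have h2 : (12 * m) * m < p ^ a * m := by
        calc (12 * m) * m = 12 * (m * m) := by ring
          _ < p ^ A := h1
          _ < p ^ a * m := hlt
      exact Nat.lt_of_mul_lt_mul_right h2
    omega


end Stmt19Aux

/-- for all positive integers `m` and `n` there is a bound `B` such that
for every set of primes `π` and every finite group `G`: if `G ∈ C_π(m, n)` (i.e. for all
subsets `S₁, S₂` of the set of `π`-elements of `G` with `|S₁| = m`, `|S₂| = n` there are
`x ∈ S₁`, `y ∈ S₂` with `xy = yx`) and the `π`-part of `|G|` exceeds `B` (i.e. some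
divisor of `|G|` all of whose prime factors lie in `π` exceeds `B`), then `G` has an
abelian Hall `π`-subgroup. -/
theorem stmt19 (m n : ℕ) (hm : 0 < m) (hn : 0 < n) :
    ∃ B : ℕ, ∀ (π : Set ℕ), (∀ q ∈ π, Nat.Prime q) →
      ∀ (G : Type) [Group G] [Finite G],
        (∀ S₁ S₂ : Finset G, S₁.card = m → S₂.card = n →
          (∀ x ∈ S₁, ∀ q : ℕ, q.Prime → q ∣ orderOf x → q ∈ π) →
          (∀ y ∈ S₂, ∀ q : ℕ, q.Prime → q ∣ orderOf y → q ∈ π) →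
          ∃ x ∈ S₁, ∃ y ∈ S₂, x * y = y * x) →
        (∃ d : ℕ, d ∣ Nat.card G ∧ (∀ q : ℕ, q.Prime → q ∣ d → q ∈ π) ∧ B < d) →
        ∃ H : Subgroup G, IsMulCommutative H ∧
          (∀ q : ℕ, q.Prime → q ∣ Nat.card H → q ∈ π) ∧
          (∀ q : ℕ, q.Prime → q ∣ H.index → q ∉ π) := by
  classical
  refine ⟨(Stmt19Aux.N0 m n) ^ (Stmt19Aux.N0 m n + 1), ?_⟩
  intro π hπ G _ _ hHyp hd
  obtain ⟨d, hdvd, hdπ, hdB⟩ := hd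
  haveI : Fintype G := Fintype.ofFinite G
  set N₁ := Stmt19Aux.N0 m n with hN₁
  set P : Finset G := Finset.univ.filter (Stmt19Aux.piPred π) with hPdef
  have hP : ∀ x : G, x ∈ P ↔ Stmt19Aux.piPred π x := by
    intro x; simp [hPdef]
  have hG0 : Nat.card G ≠ 0 := Nat.card_pos.ne'
  have hd0 : d ≠ 0 := by
    intro h; rw [h] at hdB; omega
  -- find a prime p ∈ π whose p-part of d is large
  have hex : ∃ p ∈ d.primeFactors, N₁ < p ^ (d.factorization p) := by
    by_contra hcon
    push_neg at hcon
    have h1 : d = ∏ p ∈ d.primeFactors, p ^ (d.factorization p) := by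
      conv_lhs => rw [← Nat.factorization_prod_pow_eq_self hd0]
      rw [Finsupp.prod, Nat.support_factorization]
    have hN₁pos : 0 < N₁ := by
      rw [hN₁]; unfold Stmt19Aux.N0; omega
    have h3 : d.primeFactors.card ≤ N₁ + 1 := by
      have hsub : d.primeFactors ⊆ Finset.range (N₁ + 1) := by
        intro p hp
        have hpos : d.factorization p ≠ 0 := by
          rw [← Finsupp.mem_support_iff, Nat.support_factorization]; exact hp
        have hple : p ≤ p ^ (d.factorization p) := Nat.le_self_pow hpos p
        exact Finset.mem_range.mpr (lt_of_le_of_lt (hple.trans (hcon p hp)) (Nat.lt_succ_self _))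
      simpa using Finset.card_le_card hsub
    have h4 : d ≤ N₁ ^ (N₁ + 1) := by
      calc d = ∏ p ∈ d.primeFactors, p ^ (d.factorization p) := h1
        _ ≤ N₁ ^ d.primeFactors.card := Finset.prod_le_pow_card _ _ _ (fun p hp => hcon p hp)
        _ ≤ N₁ ^ (N₁ + 1) := Nat.pow_le_pow_right hN₁pos h3
    omega
  obtain ⟨p, hpf, hplarge⟩ := hex
  have hp : p.Prime := Nat.prime_of_mem_primeFactors hpf
  have hpπ : p ∈ π := hdπ p hp (Nat.dvd_of_mem_primeFactors hpf)
  have hplarge' : N₁ < p ^ ((Nat.card G).factorization p) := by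
    have h1 : p ^ (d.factorization p) ∣ Nat.card G := (Nat.ordProj_dvd d p).trans hdvd
    have h2 : d.factorization p ≤ (Nat.card G).factorization p :=
      (Nat.Prime.pow_dvd_iff_le_factorization hp hG0).mp h1
    exact lt_of_lt_of_le hplarge (Nat.pow_le_pow_right hp.one_lt.le h2)
  -- the combinatorial hypothesis
  have C1 : ∀ S₁ : Finset G, S₁ ⊆ P → S₁.card = m →
      (P.filter (fun y => ∀ x ∈ S₁, ¬ Commute x y)).card < n := by
    intro S₁ hsub hcard
    by_contra hcon
    push_neg at hcon
    obtain ⟨S₂, hS₂sub, hS₂card⟩ := Finset.exists_subset_card_eq hcon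
    obtain ⟨x, hx, y, hy, hxy⟩ := hHyp S₁ S₂ hcard hS₂card
      (fun x hx => (hP x).mp (hsub hx))
      (fun y hy => (hP y).mp ((Finset.filter_subset _ _) (hS₂sub hy)))
    exact (Finset.mem_filter.mp (hS₂sub hy)).2 x hx hxy
  -- all π-elements commute
  have hcomm : ∀ u ∈ P, ∀ v ∈ P, Commute u v :=
    Stmt19Aux.no_edge m n hm hn hP C1 hp hpπ hplarge'
  -- the subgroup of π-elements
  let H : Subgroup G :=
    { carrier := {x : G | Stmt19Aux.piPred π x}
      one_mem' := by
        intro q hq hdvd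
        rw [orderOf_one] at hdvd
        exact absurd (Nat.dvd_one.mp hdvd) hq.ne_one
      mul_mem' := by
        intro a b ha hb
        have hcab : Commute a b := hcomm a ((hP a).mpr ha) b ((hP b).mpr hb)
        exact (hP _).mp (Stmt19Aux.mul_mem_P hP ((hP a).mpr ha) ((hP b).mpr hb) hcab)
      inv_mem' := by
        intro a ha q hq hdvd
        rw [orderOf_inv] at hdvd
        exact ha q hq hdvd }
  have hHmem : ∀ x : G, x ∈ H ↔ Stmt19Aux.piPred π x := fun x => Iff.rfl
  refine ⟨H, ?_, ?_, ?_⟩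
  · exact ⟨⟨fun a b => Subtype.ext
      (hcomm a.1 ((hP _).mpr a.2) b.1 ((hP _).mpr b.2))⟩⟩
  · intro q hq hqdvd
    haveI := Fact.mk hq
    rw [Nat.card_eq_fintype_card] at hqdvd
    obtain ⟨g, hg⟩ := exists_prime_orderOf_dvd_card q hqdvd
    have horder : orderOf (g : G) = q := by rw [Subgroup.orderOf_coe]; exact hg
    exact g.2 q hq (by rw [horder])
  · intro q hq hqdvd hqπ
    haveI := Fact.mk hq
    obtain ⟨Qs⟩ := Sylow.nonempty (p := q) (G := G)
    have hQsH : (Qs : Subgroup G) ≤ H := by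
      intro x hx
      rw [hHmem]
      intro r hr hrdvd
      have h1 : orderOf x ∣ Nat.card Qs := Subgroup.orderOf_dvd_natCard _ hx
      rw [Qs.card_eq_multiplicity] at h1
      have : r ∣ q := hr.dvd_of_dvd_pow (hrdvd.trans h1)
      rwa [(Nat.prime_dvd_prime_iff_eq hr hq).mp this]
    have h2 : q ^ ((Nat.card G).factorization q) ∣ Nat.card H := by
      rw [← Qs.card_eq_multiplicity]
      exact Subgroup.card_dvd_of_le hQsH
    have h3 : q ^ ((Nat.card G).factorization q + 1) ∣ Nat.card G := by
      have h4 : q ^ ((Nat.card G).factorization q + 1) ∣ Nat.card H * H.index := by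
        rw [pow_succ]; exact mul_dvd_mul h2 hqdvd
      rwa [Subgroup.card_mul_index] at h4
    have := (Nat.Prime.pow_dvd_iff_le_factorization hq hG0).mp h3
    omega
end
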